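/- arXiv:2512.11540 — 3 statements merged into one kernel-verified Lean document; each statement's English description precedes it below -/
import Mathlib

section
/- Let k be a field of characteristic zero, (A, ∗, ∘) a finite-dimensional pre-Poisson algebra and r ∈ A ⊗ A symmetric (τ(r) = r). Then r is a solution of the pre-Poisson Yang–Baxter equation in (A, ∗, ∘) if and only if the linear map r^♯ : A* → A is an 𝒪-operator of (A, ∗, ∘) associated to the coregular representation, i.e. for all ξ₁, ξ₂ ∈ A*: r^♯(ξ₁) ∗ r^♯(ξ₂) = r^♯(α) where α ∈ A* is defined by ⟨α, v⟩ = ⟨ξ₂, r^♯(ξ₁) ∗ v + v ∗ r^♯(ξ₁)⟩ − ⟨ξ₁, v ∗ r^♯(ξ₂)⟩ for all v ∈ A, and r^♯(ξ₁) ∘ r^♯(ξ₂) = r^♯(β) where β ∈ A* is defined by ⟨β, v⟩ = ⟨ξ₂, v ∘ r^♯(ξ₁) − r^♯(ξ₁) ∘ v⟩ + ⟨ξ₁, v ∘ r^♯(ξ₂)⟩ for all v ∈ A. -/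
open TensorProduct

noncomputable section

def IsZinbiel {k A : Type} [Field k] [AddCommGroup A] [Module k A]
    (ast : A →ₗ[k] A →ₗ[k] A) : Prop :=
  ∀ a₁ a₂ a₃ : A, ast a₁ (ast a₂ a₃) = ast (ast a₁ a₂) a₃ + ast (ast a₂ a₁) a₃

def IsPreLie {k A : Type} [Field k] [AddCommGroup A] [Module k A]
    (circ : A →ₗ[k] A →ₗ[k] A) : Prop :=
  ∀ a₁ a₂ a₃ : A,
    circ (circ a₁ a₂) a₃ - circ a₁ (circ a₂ a₃)
      = circ (circ a₂ a₁) a₃ - circ a₂ (circ a₁ a₃)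

def IsPerm {k B : Type} [Field k] [AddCommGroup B] [Module k B]
    (dia : B →ₗ[k] B →ₗ[k] B) : Prop :=
  ∀ b₁ b₂ b₃ : B,
    dia b₁ (dia b₂ b₃) = dia (dia b₁ b₂) b₃ ∧
    dia (dia b₁ b₂) b₃ = dia (dia b₂ b₁) b₃

def IsPrePoisson {k A : Type} [Field k] [AddCommGroup A] [Module k A]
    (ast circ : A →ₗ[k] A →ₗ[k] A) : Prop :=
  IsZinbiel ast ∧ IsPreLie circ ∧
  (∀ a₁ a₂ a₃ : A,
    ast (circ a₁ a₂ - circ a₂ a₁) a₃ = circ a₁ (ast a₂ a₃) - ast a₂ (circ a₁ a₃)) ∧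
  (∀ a₁ a₂ a₃ : A,
    circ (ast a₁ a₂ + ast a₂ a₁) a₃ = ast a₁ (circ a₂ a₃) + ast a₂ (circ a₁ a₃))

def IsPoisson {k P : Type} [Field k] [AddCommGroup P] [Module k P]
    (mul br : P →ₗ[k] P →ₗ[k] P) : Prop :=
  (∀ u v : P, mul u v = mul v u) ∧
  (∀ u v w : P, mul (mul u v) w = mul u (mul v w)) ∧
  (∀ u v : P, br u v = - br v u) ∧
  (∀ u v w : P, br (br u v) w + br (br v w) u + br (br w u) v = 0) ∧
  (∀ u v w : P, br u (mul v w) = mul (br u v) w + mul v (br u w))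

def idm (k M : Type) [Field k] [AddCommGroup M] [Module k M] : M →ₗ[k] M :=
  LinearMap.id

def tau (k M : Type) [Field k] [AddCommGroup M] [Module k M] :
    M ⊗[k] M →ₗ[k] M ⊗[k] M :=
  (TensorProduct.comm k M M).toLinearMap

def unassoc (k M : Type) [Field k] [AddCommGroup M] [Module k M] :
    M ⊗[k] (M ⊗[k] M) →ₗ[k] (M ⊗[k] M) ⊗[k] M :=
  (TensorProduct.assoc k M M M).symm.toLinearMap

def intch (k A B : Type) [Field k] [AddCommGroup A] [Module k A]
    [AddCommGroup B] [Module k B] :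
    (A ⊗[k] A) ⊗[k] (B ⊗[k] B) →ₗ[k] (A ⊗[k] B) ⊗[k] (A ⊗[k] B) :=
  (TensorProduct.tensorTensorTensorComm k A A B B).toLinearMap

def IsZinbielCo {k A : Type} [Field k] [AddCommGroup A] [Module k A]
    (ϑ : A →ₗ[k] A ⊗[k] A) : Prop :=
  ∀ a : A,
    TensorProduct.map ϑ (idm k A) (ϑ a)
      + TensorProduct.map (tau k A) (idm k A) (TensorProduct.map ϑ (idm k A) (ϑ a))
    = unassoc k A (TensorProduct.map (idm k A) ϑ (ϑ a))

def IsPermCo {k B : Type} [Field k] [AddCommGroup B] [Module k B]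
    (ν : B →ₗ[k] B ⊗[k] B) : Prop :=
  ∀ b : B,
    TensorProduct.map ν (idm k B) (ν b)
      = unassoc k B (TensorProduct.map (idm k B) ν (ν b)) ∧
    TensorProduct.map ν (idm k B) (ν b)
      = TensorProduct.map (tau k B) (idm k B) (TensorProduct.map ν (idm k B) (ν b))

def IsPreLieCo {k A : Type} [Field k] [AddCommGroup A] [Module k A]
    (θ : A →ₗ[k] A ⊗[k] A) : Prop :=
  ∀ a : A,
    unassoc k A (TensorProduct.map (idm k A) θ (θ a))
      - TensorProduct.map (tau k A) (idm k A)
          (unassoc k A (TensorProduct.map (idm k A) θ (θ a)))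
    = TensorProduct.map θ (idm k A) (θ a)
      - TensorProduct.map (tau k A) (idm k A) (TensorProduct.map θ (idm k A) (θ a))

def Zexp {k A : Type} [Field k] [AddCommGroup A] [Module k A]
    (ast : A →ₗ[k] A →ₗ[k] A) {p : ℕ} (x y : Fin p → A) : (A ⊗[k] A) ⊗[k] A :=
  ∑ i : Fin p, ∑ j : Fin p,
    (((ast (x i) (x j)) ⊗ₜ[k] (y j)) ⊗ₜ[k] (y i)
      + ((y j) ⊗ₜ[k] (ast (x i) (x j))) ⊗ₜ[k] (y i)
      + ((x i) ⊗ₜ[k] (x j)) ⊗ₜ[k] (ast (y i) (y j))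
      + ((x j) ⊗ₜ[k] (x i)) ⊗ₜ[k] (ast (y i) (y j))
      - ((x i) ⊗ₜ[k] (ast (y i) (x j))) ⊗ₜ[k] (y j)
      - ((x j) ⊗ₜ[k] (ast (x i) (y j))) ⊗ₜ[k] (y i)
      - ((ast (x i) (y j)) ⊗ₜ[k] (x j)) ⊗ₜ[k] (y i)
      - ((ast (y i) (x j)) ⊗ₜ[k] (x i)) ⊗ₜ[k] (y j))

def PLexp {k A : Type} [Field k] [AddCommGroup A] [Module k A]
    (circ : A →ₗ[k] A →ₗ[k] A) {p : ℕ} (x y : Fin p → A) : (A ⊗[k] A) ⊗[k] A :=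
  ∑ i : Fin p, ∑ j : Fin p,
    (((circ (x i) (x j)) ⊗ₜ[k] (y j)) ⊗ₜ[k] (y i)
      + ((x j) ⊗ₜ[k] (circ (x i) (y j))) ⊗ₜ[k] (y i)
      + ((circ (y i) (x j)) ⊗ₜ[k] (x i)) ⊗ₜ[k] (y j)
      + ((x j) ⊗ₜ[k] (x i)) ⊗ₜ[k] (circ (y i) (y j))
      - ((y j) ⊗ₜ[k] (circ (x i) (x j))) ⊗ₜ[k] (y i)
      - ((x i) ⊗ₜ[k] (circ (y i) (x j))) ⊗ₜ[k] (y j)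
      - ((circ (x i) (y j)) ⊗ₜ[k] (x j)) ⊗ₜ[k] (y i)
      - ((x i) ⊗ₜ[k] (x j)) ⊗ₜ[k] (circ (y i) (y j)))

def AYexp {k P : Type} [Field k] [AddCommGroup P] [Module k P]
    (m : P →ₗ[k] P →ₗ[k] P) {ι : Type} [Fintype ι] (u v : ι → P) :
    (P ⊗[k] P) ⊗[k] P :=
  ∑ α : ι, ∑ β : ι,
    (((m (u α) (u β)) ⊗ₜ[k] (v α)) ⊗ₜ[k] (v β)
      + ((u α) ⊗ₜ[k] (m (v α) (u β))) ⊗ₜ[k] (v β)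
      - ((u β) ⊗ₜ[k] (u α)) ⊗ₜ[k] (m (v α) (v β)))

def CYexp {k P : Type} [Field k] [AddCommGroup P] [Module k P]
    (br : P →ₗ[k] P →ₗ[k] P) {ι : Type} [Fintype ι] (u v : ι → P) :
    (P ⊗[k] P) ⊗[k] P :=
  ∑ α : ι, ∑ β : ι,
    (((br (u α) (u β)) ⊗ₜ[k] (v α)) ⊗ₜ[k] (v β)
      + ((u α) ⊗ₜ[k] (u β)) ⊗ₜ[k] (br (v α) (v β))
      + ((u α) ⊗ₜ[k] (br (v α) (u β))) ⊗ₜ[k] (v β))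

def sharp (k : Type) [Field k] {V : Type} [AddCommGroup V] [Module k V]
    (s : V ⊗[k] V) (ξ : V →ₗ[k] k) : V :=
  TensorProduct.lid k V (LinearMap.rTensor V ξ s)

abbrev PermB (k : Type) [Field k] : Type := ((ℤ × ℤ) × Fin 2) →₀ k

def bB (k : Type) [Field k] (i₁ i₂ : ℤ) (s : Fin 2) : PermB k :=
  Finsupp.single ((i₁, i₂), s) 1


section Aux16

variable {k A : Type} [Field k] [AddCommGroup A] [Module k A]

def ev3 (ξa ξb ξc : A →ₗ[k] k) : (A ⊗[k] A) ⊗[k] A →ₗ[k] k :=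
  TensorProduct.lift ((LinearMap.mul k k).compl₁₂
    (TensorProduct.lift ((LinearMap.mul k k).compl₁₂ ξa ξb)) ξc)

@[simp] lemma ev3_tmul (ξa ξb ξc : A →ₗ[k] k) (a b c : A) :
    ev3 ξa ξb ξc ((a ⊗ₜ[k] b) ⊗ₜ[k] c) = ξa a * ξb b * ξc c := by
  simp [ev3, LinearMap.compl₁₂_apply, LinearMap.mul_apply']

lemma ev3_repr {ι : Type} (b : Module.Basis ι k A) (i j l : ι)
    (s : (A ⊗[k] A) ⊗[k] A) :
    ((b.tensorProduct b).tensorProduct b).repr s ((i, j), l)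
      = ev3 (b.coord i) (b.coord j) (b.coord l) s := by
  induction s using TensorProduct.induction_on with
  | zero => simp
  | tmul z c =>
    induction z using TensorProduct.induction_on with
    | zero => simp
    | tmul a a' =>
      simp only [Module.Basis.tensorProduct_repr_tmul_apply, Module.Basis.coord_apply, ev3_tmul,
        smul_eq_mul]
      ring
    | add u v hu hv => simp only [add_tmul, map_add, Finsupp.add_apply, hu, hv]
  | add u v hu hv => simp only [map_add, Finsupp.add_apply, hu, hv]

lemma ev3_sep [FiniteDimensional k A] (t : (A ⊗[k] A) ⊗[k] A)
    (h : ∀ ξa ξb ξc : A →ₗ[k] k, ev3 ξa ξb ξc t = 0) : t = 0 := by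
  classical
  set b := Module.finBasis k A with hb
  have h0 : ((b.tensorProduct b).tensorProduct b).repr t = 0 := by
    ext idx
    obtain ⟨⟨i, j⟩, l⟩ := idx
    simp only [Finsupp.coe_zero, Pi.zero_apply]
    rw [ev3_repr b i j l t]
    exact h _ _ _
  exact (LinearEquiv.map_eq_zero_iff ((b.tensorProduct b).tensorProduct b).repr).mp h0

end Aux16
theorem statement16 (k A : Type) [Field k] [CharZero k]
    [AddCommGroup A] [Module k A] [FiniteDimensional k A]
    (ast circ : A →ₗ[k] A →ₗ[k] A) (hA : IsPrePoisson ast circ)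
    (r : A ⊗[k] A) (p : ℕ) (x y : Fin p → A)
    (hr : r = ∑ i : Fin p, (x i) ⊗ₜ[k] (y i))
    (hsym : (TensorProduct.comm k A A) r = r)
    :
    (Zexp ast x y = 0 ∧ PLexp circ x y = 0)
      ↔ (∀ ξ₁ ξ₂ : A →ₗ[k] k,
          ast (sharp k r ξ₁) (sharp k r ξ₂)
            = sharp k r (ξ₂ ∘ₗ (ast (sharp k r ξ₁) + ast.flip (sharp k r ξ₁))
                - ξ₁ ∘ₗ (ast.flip (sharp k r ξ₂))) ∧
          circ (sharp k r ξ₁) (sharp k r ξ₂)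
            = sharp k r (ξ₂ ∘ₗ (circ.flip (sharp k r ξ₁) - circ (sharp k r ξ₁))
                + ξ₁ ∘ₗ (circ.flip (sharp k r ξ₂)))) := by
  classical
  have sharp_eq : ∀ ξ : A →ₗ[k] k, sharp k r ξ = ∑ i, ξ (x i) • y i := by
    intro ξ
    rw [sharp, hr, map_sum, map_sum]
    simp [TensorProduct.lid_tmul]
  have hsym' : ∑ i, (y i) ⊗ₜ[k] (x i) = ∑ i, (x i) ⊗ₜ[k] (y i) := by
    calc ∑ i, (y i) ⊗ₜ[k] (x i)
        = (TensorProduct.comm k A A) (∑ i, (x i) ⊗ₜ[k] (y i)) := by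
          rw [map_sum]; simp
      _ = (TensorProduct.comm k A A) r := by rw [hr]
      _ = r := hsym
      _ = ∑ i, (x i) ⊗ₜ[k] (y i) := hr
  have sp : ∀ f g : A →ₗ[k] k, ∑ j, f (x j) * g (y j) = ∑ j, f (y j) * g (x j) := by
    intro f g
    have h := congrArg (TensorProduct.lift ((LinearMap.mul k k).compl₁₂ f g)) hsym'
    simpa only [map_sum, TensorProduct.lift.tmul, LinearMap.compl₁₂_apply,
      LinearMap.mul_apply'] using h.symm
  have swap_mul : ∀ (f g : A →ₗ[k] k) (c : k),
      ∑ j, f (x j) * g (y j) * c = ∑ j, f (y j) * g (x j) * c := by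
    intro f g c
    rw [← Finset.sum_mul, ← Finset.sum_mul, sp f g]
  have swA : ∀ (m : A →ₗ[k] A →ₗ[k] A) (h₁ h₂ : A →ₗ[k] k) (a : A) (c : k),
      ∑ j, h₁ (m a (x j)) * h₂ (y j) * c = ∑ j, h₁ (m a (y j)) * h₂ (x j) * c := by
    intro m h₁ h₂ a c
    simpa only [LinearMap.coe_comp, Function.comp_apply] using
      swap_mul (h₁ ∘ₗ m a) h₂ c
  have swC : ∀ (m : A →ₗ[k] A →ₗ[k] A) (h₁ h₂ : A →ₗ[k] k) (a : A) (c : k),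
      ∑ j, h₁ (x j) * h₂ (m a (y j)) * c = ∑ j, h₁ (y j) * h₂ (m a (x j)) * c := by
    intro m h₁ h₂ a c
    simpa only [LinearMap.coe_comp, Function.comp_apply] using
      swap_mul h₁ (h₂ ∘ₗ m a) c
  have swD : ∀ (m : A →ₗ[k] A →ₗ[k] A) (h₁ h₂ : A →ₗ[k] k) (a : A) (c : k),
      ∑ j, h₁ (x j) * h₂ (m (y j) a) * c = ∑ j, h₁ (y j) * h₂ (m (x j) a) * c := by
    intro m h₁ h₂ a c
    simpa only [LinearMap.coe_comp, Function.comp_apply, LinearMap.flip_apply] using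
      swap_mul h₁ (h₂ ∘ₗ m.flip a) c
  -- Zinbiel part
  have e1 : ∀ ξ₁ ξ₂ ξ₃ : A →ₗ[k] k, ev3 ξ₁ ξ₃ ξ₂ (Zexp ast x y) = ∑ i, ∑ j,
      (ξ₁ (ast (x i) (x j)) * ξ₃ (y j) * ξ₂ (y i)
        + ξ₁ (y j) * ξ₃ (ast (x i) (x j)) * ξ₂ (y i)
        + ξ₁ (x i) * ξ₃ (x j) * ξ₂ (ast (y i) (y j))
        + ξ₁ (x j) * ξ₃ (x i) * ξ₂ (ast (y i) (y j))
        - ξ₁ (x i) * ξ₃ (ast (y i) (x j)) * ξ₂ (y j)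
        - ξ₁ (x j) * ξ₃ (ast (x i) (y j)) * ξ₂ (y i)
        - ξ₁ (ast (x i) (y j)) * ξ₃ (x j) * ξ₂ (y i)
        - ξ₁ (ast (y i) (x j)) * ξ₃ (x i) * ξ₂ (y j)) := by
    intro ξ₁ ξ₂ ξ₃
    simp only [Zexp, map_sum, map_add, map_sub, ev3_tmul]
  have e2 : ∀ ξ₁ ξ₂ ξ₃ : A →ₗ[k] k,
      ξ₃ (sharp k r (ξ₂ ∘ₗ (ast (sharp k r ξ₁) + ast.flip (sharp k r ξ₁))
            - ξ₁ ∘ₗ (ast.flip (sharp k r ξ₂)))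
          - ast (sharp k r ξ₁) (sharp k r ξ₂)) = ∑ i, ∑ j,
      (ξ₁ (x i) * ξ₂ (ast (y i) (x j)) * ξ₃ (y j)
        + ξ₁ (x i) * ξ₂ (ast (x j) (y i)) * ξ₃ (y j)
        - ξ₂ (x i) * ξ₁ (ast (x j) (y i)) * ξ₃ (y j)
        - ξ₁ (x i) * ξ₂ (x j) * ξ₃ (ast (y i) (y j))) := by
    intro ξ₁ ξ₂ ξ₃
    rw [sharp_eq (ξ₂ ∘ₗ (ast (sharp k r ξ₁) + ast.flip (sharp k r ξ₁))
            - ξ₁ ∘ₗ (ast.flip (sharp k r ξ₂))), sharp_eq ξ₁, sharp_eq ξ₂]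
    simp only [map_sum, map_smul, map_sub, map_add, LinearMap.sub_apply,
      LinearMap.add_apply, LinearMap.coe_comp, Function.comp_apply,
      LinearMap.flip_apply, LinearMap.sum_apply, LinearMap.smul_apply,
      smul_eq_mul, Finset.sum_mul, Finset.mul_sum, Finset.sum_sub_distrib,
      Finset.sum_add_distrib, sub_mul, add_mul]
    have c1 : (∑ j : Fin p, ∑ i : Fin p, ξ₁ (x i) * ξ₂ (ast (y i) (x j)) * ξ₃ (y j))
        = ∑ i : Fin p, ∑ j : Fin p, ξ₁ (x i) * ξ₂ (ast (y i) (x j)) * ξ₃ (y j) :=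
      Finset.sum_comm
    have c2 : (∑ j : Fin p, ∑ i : Fin p, ξ₁ (x i) * ξ₂ (ast (x j) (y i)) * ξ₃ (y j))
        = ∑ i : Fin p, ∑ j : Fin p, ξ₁ (x i) * ξ₂ (ast (x j) (y i)) * ξ₃ (y j) :=
      Finset.sum_comm
    have c3 : (∑ j : Fin p, ∑ i : Fin p, ξ₂ (x i) * ξ₁ (ast (x j) (y i)) * ξ₃ (y j))
        = ∑ i : Fin p, ∑ j : Fin p, ξ₂ (x i) * ξ₁ (ast (x j) (y i)) * ξ₃ (y j) :=
      Finset.sum_comm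
    have c4 : (∑ j : Fin p, ∑ i : Fin p, ξ₂ (x j) * (ξ₁ (x i) * ξ₃ (ast (y i) (y j))))
        = ∑ i : Fin p, ∑ j : Fin p, ξ₁ (x i) * ξ₂ (x j) * ξ₃ (ast (y i) (y j)) := by
      rw [Finset.sum_comm]
      exact Finset.sum_congr rfl fun i _ => Finset.sum_congr rfl fun j _ => by ring
    rw [c1, c2, c3, c4]
  have hZ : ∀ ξ₁ ξ₂ ξ₃ : A →ₗ[k] k,
      ev3 ξ₁ ξ₃ ξ₂ (Zexp ast x y)
        = ξ₃ (sharp k r (ξ₂ ∘ₗ (ast (sharp k r ξ₁) + ast.flip (sharp k r ξ₁))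
              - ξ₁ ∘ₗ (ast.flip (sharp k r ξ₂)))
            - ast (sharp k r ξ₁) (sharp k r ξ₂)) := by
    intro ξ₁ ξ₂ ξ₃
    rw [e1 ξ₁ ξ₂ ξ₃, e2 ξ₁ ξ₂ ξ₃]
    have hk1 : (∑ i : Fin p, ∑ j : Fin p, ξ₁ (ast (x i) (x j)) * ξ₃ (y j) * ξ₂ (y i))
        = ∑ i : Fin p, ∑ j : Fin p, ξ₁ (ast (x i) (y j)) * ξ₃ (x j) * ξ₂ (y i) :=
      Finset.sum_congr rfl fun i _ => swA ast ξ₁ ξ₃ (x i) (ξ₂ (y i))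
    have hk2 : (∑ i : Fin p, ∑ j : Fin p, ξ₁ (y j) * ξ₃ (ast (x i) (x j)) * ξ₂ (y i))
        = ∑ i : Fin p, ∑ j : Fin p, ξ₁ (x j) * ξ₃ (ast (x i) (y j)) * ξ₂ (y i) := by
      refine Finset.sum_congr rfl fun i _ => ?_
      calc ∑ j : Fin p, ξ₁ (y j) * ξ₃ (ast (x i) (x j)) * ξ₂ (y i)
          = ∑ j : Fin p, ξ₃ (ast (x i) (x j)) * ξ₁ (y j) * ξ₂ (y i) :=
            Finset.sum_congr rfl fun j _ => by ring
        _ = ∑ j : Fin p, ξ₃ (ast (x i) (y j)) * ξ₁ (x j) * ξ₂ (y i) :=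
            swA ast ξ₃ ξ₁ (x i) (ξ₂ (y i))
        _ = ∑ j : Fin p, ξ₁ (x j) * ξ₃ (ast (x i) (y j)) * ξ₂ (y i) :=
            Finset.sum_congr rfl fun j _ => by ring
    have hk3 : (∑ i : Fin p, ∑ j : Fin p, ξ₁ (x i) * ξ₃ (x j) * ξ₂ (ast (y i) (y j)))
        = ∑ i : Fin p, ∑ j : Fin p, ξ₁ (x i) * ξ₂ (ast (y i) (x j)) * ξ₃ (y j) := by
      refine Finset.sum_congr rfl fun i _ => ?_
      calc ∑ j : Fin p, ξ₁ (x i) * ξ₃ (x j) * ξ₂ (ast (y i) (y j))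
          = ∑ j : Fin p, ξ₃ (x j) * ξ₂ (ast (y i) (y j)) * ξ₁ (x i) :=
            Finset.sum_congr rfl fun j _ => by ring
        _ = ∑ j : Fin p, ξ₃ (y j) * ξ₂ (ast (y i) (x j)) * ξ₁ (x i) :=
            swC ast ξ₃ ξ₂ (y i) (ξ₁ (x i))
        _ = ∑ j : Fin p, ξ₁ (x i) * ξ₂ (ast (y i) (x j)) * ξ₃ (y j) :=
            Finset.sum_congr rfl fun j _ => by ring
    have hk4 : (∑ i : Fin p, ∑ j : Fin p, ξ₁ (x j) * ξ₃ (x i) * ξ₂ (ast (y i) (y j)))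
        = ∑ i : Fin p, ∑ j : Fin p, ξ₁ (x i) * ξ₂ (ast (x j) (y i)) * ξ₃ (y j) := by
      calc (∑ i : Fin p, ∑ j : Fin p, ξ₁ (x j) * ξ₃ (x i) * ξ₂ (ast (y i) (y j)))
          = ∑ j : Fin p, ∑ i : Fin p, ξ₁ (x j) * ξ₃ (x i) * ξ₂ (ast (y i) (y j)) :=
            Finset.sum_comm
        _ = ∑ j : Fin p, ∑ i : Fin p, ξ₃ (x i) * ξ₂ (ast (y i) (y j)) * ξ₁ (x j) :=
            Finset.sum_congr rfl fun j _ => Finset.sum_congr rfl fun i _ => by ring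
        _ = ∑ j : Fin p, ∑ i : Fin p, ξ₃ (y i) * ξ₂ (ast (x i) (y j)) * ξ₁ (x j) :=
            Finset.sum_congr rfl fun j _ => swD ast ξ₃ ξ₂ (y j) (ξ₁ (x j))
        _ = ∑ i : Fin p, ∑ j : Fin p, ξ₁ (x i) * ξ₂ (ast (x j) (y i)) * ξ₃ (y j) :=
            Finset.sum_congr rfl fun i _ => Finset.sum_congr rfl fun j _ => by ring
    have hk5 : (∑ i : Fin p, ∑ j : Fin p, ξ₁ (x i) * ξ₃ (ast (y i) (x j)) * ξ₂ (y j))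
        = ∑ i : Fin p, ∑ j : Fin p, ξ₁ (x i) * ξ₂ (x j) * ξ₃ (ast (y i) (y j)) := by
      refine Finset.sum_congr rfl fun i _ => ?_
      calc ∑ j : Fin p, ξ₁ (x i) * ξ₃ (ast (y i) (x j)) * ξ₂ (y j)
          = ∑ j : Fin p, ξ₃ (ast (y i) (x j)) * ξ₂ (y j) * ξ₁ (x i) :=
            Finset.sum_congr rfl fun j _ => by ring
        _ = ∑ j : Fin p, ξ₃ (ast (y i) (y j)) * ξ₂ (x j) * ξ₁ (x i) :=
            swA ast ξ₃ ξ₂ (y i) (ξ₁ (x i))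
        _ = ∑ j : Fin p, ξ₁ (x i) * ξ₂ (x j) * ξ₃ (ast (y i) (y j)) :=
            Finset.sum_congr rfl fun j _ => by ring
    have hk8 : (∑ i : Fin p, ∑ j : Fin p, ξ₁ (ast (y i) (x j)) * ξ₃ (x i) * ξ₂ (y j))
        = ∑ i : Fin p, ∑ j : Fin p, ξ₂ (x i) * ξ₁ (ast (x j) (y i)) * ξ₃ (y j) := by
      calc (∑ i : Fin p, ∑ j : Fin p, ξ₁ (ast (y i) (x j)) * ξ₃ (x i) * ξ₂ (y j))
          = ∑ i : Fin p, ∑ j : Fin p, ξ₁ (ast (y i) (x j)) * ξ₂ (y j) * ξ₃ (x i) :=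
            Finset.sum_congr rfl fun i _ => Finset.sum_congr rfl fun j _ => by ring
        _ = ∑ i : Fin p, ∑ j : Fin p, ξ₁ (ast (y i) (y j)) * ξ₂ (x j) * ξ₃ (x i) :=
            Finset.sum_congr rfl fun i _ => swA ast ξ₁ ξ₂ (y i) (ξ₃ (x i))
        _ = ∑ j : Fin p, ∑ i : Fin p, ξ₁ (ast (y i) (y j)) * ξ₂ (x j) * ξ₃ (x i) :=
            Finset.sum_comm
        _ = ∑ j : Fin p, ∑ i : Fin p, ξ₃ (x i) * ξ₁ (ast (y i) (y j)) * ξ₂ (x j) :=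
            Finset.sum_congr rfl fun j _ => Finset.sum_congr rfl fun i _ => by ring
        _ = ∑ j : Fin p, ∑ i : Fin p, ξ₃ (y i) * ξ₁ (ast (x i) (y j)) * ξ₂ (x j) :=
            Finset.sum_congr rfl fun j _ => swD ast ξ₃ ξ₁ (y j) (ξ₂ (x j))
        _ = ∑ i : Fin p, ∑ j : Fin p, ξ₂ (x i) * ξ₁ (ast (x j) (y i)) * ξ₃ (y j) :=
            Finset.sum_congr rfl fun i _ => Finset.sum_congr rfl fun j _ => by ring
    simp only [Finset.sum_add_distrib, Finset.sum_sub_distrib]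
    rw [hk1, hk2, hk3, hk4, hk5, hk8]
    ring
  -- pre-Lie part
  have f1 : ∀ ξ₁ ξ₂ ξ₃ : A →ₗ[k] k, ev3 ξ₁ ξ₃ ξ₂ (PLexp circ x y) = ∑ i, ∑ j,
      (ξ₁ (circ (x i) (x j)) * ξ₃ (y j) * ξ₂ (y i)
        + ξ₁ (x j) * ξ₃ (circ (x i) (y j)) * ξ₂ (y i)
        + ξ₁ (circ (y i) (x j)) * ξ₃ (x i) * ξ₂ (y j)
        + ξ₁ (x j) * ξ₃ (x i) * ξ₂ (circ (y i) (y j))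
        - ξ₁ (y j) * ξ₃ (circ (x i) (x j)) * ξ₂ (y i)
        - ξ₁ (x i) * ξ₃ (circ (y i) (x j)) * ξ₂ (y j)
        - ξ₁ (circ (x i) (y j)) * ξ₃ (x j) * ξ₂ (y i)
        - ξ₁ (x i) * ξ₃ (x j) * ξ₂ (circ (y i) (y j))) := by
    intro ξ₁ ξ₂ ξ₃
    simp only [PLexp, map_sum, map_add, map_sub, ev3_tmul]
  have f2 : ∀ ξ₁ ξ₂ ξ₃ : A →ₗ[k] k,
      ξ₃ (sharp k r (ξ₂ ∘ₗ (circ.flip (sharp k r ξ₁) - circ (sharp k r ξ₁))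
            + ξ₁ ∘ₗ (circ.flip (sharp k r ξ₂)))
          - circ (sharp k r ξ₁) (sharp k r ξ₂)) = ∑ i, ∑ j,
      (ξ₁ (x i) * ξ₂ (circ (x j) (y i)) * ξ₃ (y j)
        - ξ₁ (x i) * ξ₂ (circ (y i) (x j)) * ξ₃ (y j)
        + ξ₂ (x i) * ξ₁ (circ (x j) (y i)) * ξ₃ (y j)
        - ξ₁ (x i) * ξ₂ (x j) * ξ₃ (circ (y i) (y j))) := by
    intro ξ₁ ξ₂ ξ₃
    rw [sharp_eq (ξ₂ ∘ₗ (circ.flip (sharp k r ξ₁) - circ (sharp k r ξ₁))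
            + ξ₁ ∘ₗ (circ.flip (sharp k r ξ₂))), sharp_eq ξ₁, sharp_eq ξ₂]
    simp only [map_sum, map_smul, map_sub, map_add, LinearMap.sub_apply,
      LinearMap.add_apply, LinearMap.coe_comp, Function.comp_apply,
      LinearMap.flip_apply, LinearMap.sum_apply, LinearMap.smul_apply,
      smul_eq_mul, Finset.sum_mul, Finset.mul_sum, Finset.sum_sub_distrib,
      Finset.sum_add_distrib, sub_mul, add_mul]
    have c1 : (∑ j : Fin p, ∑ i : Fin p, ξ₁ (x i) * ξ₂ (circ (x j) (y i)) * ξ₃ (y j))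
        = ∑ i : Fin p, ∑ j : Fin p, ξ₁ (x i) * ξ₂ (circ (x j) (y i)) * ξ₃ (y j) :=
      Finset.sum_comm
    have c2 : (∑ j : Fin p, ∑ i : Fin p, ξ₁ (x i) * ξ₂ (circ (y i) (x j)) * ξ₃ (y j))
        = ∑ i : Fin p, ∑ j : Fin p, ξ₁ (x i) * ξ₂ (circ (y i) (x j)) * ξ₃ (y j) :=
      Finset.sum_comm
    have c3 : (∑ j : Fin p, ∑ i : Fin p, ξ₂ (x i) * ξ₁ (circ (x j) (y i)) * ξ₃ (y j))
        = ∑ i : Fin p, ∑ j : Fin p, ξ₂ (x i) * ξ₁ (circ (x j) (y i)) * ξ₃ (y j) :=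
      Finset.sum_comm
    have c4 : (∑ j : Fin p, ∑ i : Fin p, ξ₂ (x j) * (ξ₁ (x i) * ξ₃ (circ (y i) (y j))))
        = ∑ i : Fin p, ∑ j : Fin p, ξ₁ (x i) * ξ₂ (x j) * ξ₃ (circ (y i) (y j)) := by
      rw [Finset.sum_comm]
      exact Finset.sum_congr rfl fun i _ => Finset.sum_congr rfl fun j _ => by ring
    rw [c1, c2, c3, c4]
  have hPL : ∀ ξ₁ ξ₂ ξ₃ : A →ₗ[k] k,
      ev3 ξ₁ ξ₃ ξ₂ (PLexp circ x y)
        = ξ₃ (sharp k r (ξ₂ ∘ₗ (circ.flip (sharp k r ξ₁) - circ (sharp k r ξ₁))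
              + ξ₁ ∘ₗ (circ.flip (sharp k r ξ₂)))
            - circ (sharp k r ξ₁) (sharp k r ξ₂)) := by
    intro ξ₁ ξ₂ ξ₃
    rw [f1 ξ₁ ξ₂ ξ₃, f2 ξ₁ ξ₂ ξ₃]
    have hp1 : (∑ i : Fin p, ∑ j : Fin p, ξ₁ (circ (x i) (x j)) * ξ₃ (y j) * ξ₂ (y i))
        = ∑ i : Fin p, ∑ j : Fin p, ξ₁ (circ (x i) (y j)) * ξ₃ (x j) * ξ₂ (y i) :=
      Finset.sum_congr rfl fun i _ => swA circ ξ₁ ξ₃ (x i) (ξ₂ (y i))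
    have hp2 : (∑ i : Fin p, ∑ j : Fin p, ξ₁ (x j) * ξ₃ (circ (x i) (y j)) * ξ₂ (y i))
        = ∑ i : Fin p, ∑ j : Fin p, ξ₁ (y j) * ξ₃ (circ (x i) (x j)) * ξ₂ (y i) :=
      Finset.sum_congr rfl fun i _ => swC circ ξ₁ ξ₃ (x i) (ξ₂ (y i))
    have hp3 : (∑ i : Fin p, ∑ j : Fin p, ξ₁ (circ (y i) (x j)) * ξ₃ (x i) * ξ₂ (y j))
        = ∑ i : Fin p, ∑ j : Fin p, ξ₂ (x i) * ξ₁ (circ (x j) (y i)) * ξ₃ (y j) := by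
      calc (∑ i : Fin p, ∑ j : Fin p, ξ₁ (circ (y i) (x j)) * ξ₃ (x i) * ξ₂ (y j))
          = ∑ i : Fin p, ∑ j : Fin p, ξ₁ (circ (y i) (x j)) * ξ₂ (y j) * ξ₃ (x i) :=
            Finset.sum_congr rfl fun i _ => Finset.sum_congr rfl fun j _ => by ring
        _ = ∑ i : Fin p, ∑ j : Fin p, ξ₁ (circ (y i) (y j)) * ξ₂ (x j) * ξ₃ (x i) :=
            Finset.sum_congr rfl fun i _ => swA circ ξ₁ ξ₂ (y i) (ξ₃ (x i))
        _ = ∑ j : Fin p, ∑ i : Fin p, ξ₁ (circ (y i) (y j)) * ξ₂ (x j) * ξ₃ (x i) :=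
            Finset.sum_comm
        _ = ∑ j : Fin p, ∑ i : Fin p, ξ₃ (x i) * ξ₁ (circ (y i) (y j)) * ξ₂ (x j) :=
            Finset.sum_congr rfl fun j _ => Finset.sum_congr rfl fun i _ => by ring
        _ = ∑ j : Fin p, ∑ i : Fin p, ξ₃ (y i) * ξ₁ (circ (x i) (y j)) * ξ₂ (x j) :=
            Finset.sum_congr rfl fun j _ => swD circ ξ₃ ξ₁ (y j) (ξ₂ (x j))
        _ = ∑ i : Fin p, ∑ j : Fin p, ξ₂ (x i) * ξ₁ (circ (x j) (y i)) * ξ₃ (y j) :=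
            Finset.sum_congr rfl fun i _ => Finset.sum_congr rfl fun j _ => by ring
    have hp4 : (∑ i : Fin p, ∑ j : Fin p, ξ₁ (x j) * ξ₃ (x i) * ξ₂ (circ (y i) (y j)))
        = ∑ i : Fin p, ∑ j : Fin p, ξ₁ (x i) * ξ₂ (circ (x j) (y i)) * ξ₃ (y j) := by
      calc (∑ i : Fin p, ∑ j : Fin p, ξ₁ (x j) * ξ₃ (x i) * ξ₂ (circ (y i) (y j)))
          = ∑ j : Fin p, ∑ i : Fin p, ξ₁ (x j) * ξ₃ (x i) * ξ₂ (circ (y i) (y j)) :=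
            Finset.sum_comm
        _ = ∑ j : Fin p, ∑ i : Fin p, ξ₃ (x i) * ξ₂ (circ (y i) (y j)) * ξ₁ (x j) :=
            Finset.sum_congr rfl fun j _ => Finset.sum_congr rfl fun i _ => by ring
        _ = ∑ j : Fin p, ∑ i : Fin p, ξ₃ (y i) * ξ₂ (circ (x i) (y j)) * ξ₁ (x j) :=
            Finset.sum_congr rfl fun j _ => swD circ ξ₃ ξ₂ (y j) (ξ₁ (x j))
        _ = ∑ i : Fin p, ∑ j : Fin p, ξ₁ (x i) * ξ₂ (circ (x j) (y i)) * ξ₃ (y j) :=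
            Finset.sum_congr rfl fun i _ => Finset.sum_congr rfl fun j _ => by ring
    have hp6 : (∑ i : Fin p, ∑ j : Fin p, ξ₁ (x i) * ξ₃ (circ (y i) (x j)) * ξ₂ (y j))
        = ∑ i : Fin p, ∑ j : Fin p, ξ₁ (x i) * ξ₂ (x j) * ξ₃ (circ (y i) (y j)) := by
      refine Finset.sum_congr rfl fun i _ => ?_
      calc ∑ j : Fin p, ξ₁ (x i) * ξ₃ (circ (y i) (x j)) * ξ₂ (y j)
          = ∑ j : Fin p, ξ₃ (circ (y i) (x j)) * ξ₂ (y j) * ξ₁ (x i) :=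
            Finset.sum_congr rfl fun j _ => by ring
        _ = ∑ j : Fin p, ξ₃ (circ (y i) (y j)) * ξ₂ (x j) * ξ₁ (x i) :=
            swA circ ξ₃ ξ₂ (y i) (ξ₁ (x i))
        _ = ∑ j : Fin p, ξ₁ (x i) * ξ₂ (x j) * ξ₃ (circ (y i) (y j)) :=
            Finset.sum_congr rfl fun j _ => by ring
    have hp8 : (∑ i : Fin p, ∑ j : Fin p, ξ₁ (x i) * ξ₃ (x j) * ξ₂ (circ (y i) (y j)))
        = ∑ i : Fin p, ∑ j : Fin p, ξ₁ (x i) * ξ₂ (circ (y i) (x j)) * ξ₃ (y j) := by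
      refine Finset.sum_congr rfl fun i _ => ?_
      calc ∑ j : Fin p, ξ₁ (x i) * ξ₃ (x j) * ξ₂ (circ (y i) (y j))
          = ∑ j : Fin p, ξ₃ (x j) * ξ₂ (circ (y i) (y j)) * ξ₁ (x i) :=
            Finset.sum_congr rfl fun j _ => by ring
        _ = ∑ j : Fin p, ξ₃ (y j) * ξ₂ (circ (y i) (x j)) * ξ₁ (x i) :=
            swC circ ξ₃ ξ₂ (y i) (ξ₁ (x i))
        _ = ∑ j : Fin p, ξ₁ (x i) * ξ₂ (circ (y i) (x j)) * ξ₃ (y j) :=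
            Finset.sum_congr rfl fun j _ => by ring
    simp only [Finset.sum_add_distrib, Finset.sum_sub_distrib]
    rw [hp1, hp2, hp3, hp4, hp6, hp8]
    ring
  constructor
  · rintro ⟨hZ0, hP0⟩ ξ₁ ξ₂
    constructor
    · have hv : ∀ ξ₃ : A →ₗ[k] k,
          ξ₃ (sharp k r (ξ₂ ∘ₗ (ast (sharp k r ξ₁) + ast.flip (sharp k r ξ₁))
              - ξ₁ ∘ₗ (ast.flip (sharp k r ξ₂)))
            - ast (sharp k r ξ₁) (sharp k r ξ₂)) = 0 := by
        intro ξ₃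
        rw [← hZ ξ₁ ξ₂ ξ₃, hZ0, map_zero]
      have h0 := (Module.forall_dual_apply_eq_zero_iff k (V := A) _).mp hv
      exact (sub_eq_zero.mp h0).symm
    · have hv : ∀ ξ₃ : A →ₗ[k] k,
          ξ₃ (sharp k r (ξ₂ ∘ₗ (circ.flip (sharp k r ξ₁) - circ (sharp k r ξ₁))
              + ξ₁ ∘ₗ (circ.flip (sharp k r ξ₂)))
            - circ (sharp k r ξ₁) (sharp k r ξ₂)) = 0 := by
        intro ξ₃
        rw [← hPL ξ₁ ξ₂ ξ₃, hP0, map_zero]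
      have h0 := (Module.forall_dual_apply_eq_zero_iff k (V := A) _).mp hv
      exact (sub_eq_zero.mp h0).symm
  · intro h
    constructor
    · refine ev3_sep _ fun ξa ξb ξc => ?_
      rw [hZ ξa ξc ξb, (h ξa ξc).1, sub_self, map_zero]
    · refine ev3_sep _ fun ξa ξb ξc => ?_
      rw [hPL ξa ξc ξb, (h ξa ξc).2, sub_self, map_zero]
end
end

section
/- Let k be a field of characteristic zero, (A, ∗, ∘) a finite-dimensional pre-Poisson algebra with a nondegenerate bilinear form ϖ, {e₁,…,e_n} a basis of A and {f₁,…,f_n} the dual basis with respect to ϖ (ϖ(fᵢ, eⱼ) = δ_{ij}), and r = Σᵢ eᵢ ⊗ fᵢ ∈ A ⊗ A. Then r is a symmetric solution of the pre-Poisson Yang–Baxter equation in (A, ∗, ∘) if and only if (A, ∗, ∘, ϖ) is a quasi-Frobenius pre-Poisson algebra. -/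
open TensorProduct

noncomputable section

set_option linter.unreachableTactic false
set_option linter.unusedTactic false

section Aux
variable {k A : Type} [Field k] [AddCommGroup A] [Module k A]

def pairW (ϖ : A →ₗ[k] A →ₗ[k] k) (a b : A) : A ⊗[k] A →ₗ[k] k :=
  (TensorProduct.lid k k).toLinearMap ∘ₗ TensorProduct.map (ϖ a) (ϖ b)

lemma pairW_apply (ϖ : A →ₗ[k] A →ₗ[k] k) (a b u v : A) :
    pairW ϖ a b (u ⊗ₜ[k] v) = ϖ a u * ϖ b v := by
  simp [pairW, smul_eq_mul]

def trip (ϖ : A →ₗ[k] A →ₗ[k] k) (a b c : A) : (A ⊗[k] A) ⊗[k] A →ₗ[k] k :=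
  (TensorProduct.lid k k).toLinearMap ∘ₗ
    TensorProduct.map (pairW ϖ a b) (ϖ c)

lemma trip_apply (ϖ : A →ₗ[k] A →ₗ[k] k) (a b c u v w : A) :
    trip ϖ a b c ((u ⊗ₜ[k] v) ⊗ₜ[k] w) = ϖ a u * ϖ b v * ϖ c w := by
  simp [trip, pairW, smul_eq_mul, mul_assoc]

variable {n : ℕ} (ϖ : A →ₗ[k] A →ₗ[k] k) (e : Module.Basis (Fin n) k A) (f : Fin n → A)
variable (hdual : ∀ i j : Fin n, ϖ (f i) (e j) = if i = j then 1 else 0)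
variable (hnd : ∀ a : A, (∀ a' : A, ϖ a a' = 0) → a = 0)
variable (hsym : ∀ a b : A, ϖ a b = ϖ b a)
include hdual

lemma expandA (a : A) : ∑ i, ϖ (f i) a • e i = a := by
  have h : ∀ j, ∑ i, ϖ (f i) (e j) • e i = e j := by
    intro j
    simp [hdual, ite_smul, Finset.sum_ite_eq']
  have hT : (∑ i, (ϖ (f i)).smulRight (e i) : A →ₗ[k] A) = LinearMap.id := by
    apply e.ext; intro j
    simpa [LinearMap.sum_apply] using h j
  simpa [LinearMap.sum_apply] using LinearMap.congr_fun hT a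

lemma contractA (g : A →ₗ[k] k) (c : A) : ∑ i, ϖ (f i) c * g (e i) = g c := by
  conv_rhs => rw [← expandA ϖ e f hdual c]
  simp [smul_eq_mul]

include hnd in
lemma expandB (a : A) : ∑ i, ϖ a (e i) • f i = a := by
  have key : ∀ a', ϖ (∑ i, ϖ a (e i) • f i - a) a' = 0 := by
    intro a'
    have h1 : ϖ (∑ i, ϖ a (e i) • f i) a' = ∑ i, ϖ a (e i) * ϖ (f i) a' := by
      simp [smul_eq_mul]
    have h2 : ϖ a a' = ∑ i, ϖ (f i) a' * ϖ a (e i) := by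
      conv_lhs => rw [← expandA ϖ e f hdual a']
      simp [smul_eq_mul]
    rw [map_sub, LinearMap.sub_apply, h1, h2, sub_eq_zero]
    exact Finset.sum_congr rfl fun i _ => mul_comm _ _
  exact eq_of_sub_eq_zero (hnd _ key)

include hnd in
lemma contractB (g : A →ₗ[k] k) (b : A) : ∑ i, ϖ b (e i) * g (f i) = g b := by
  conv_rhs => rw [← expandB ϖ e f hdual hnd b]
  simp [smul_eq_mul]

include hsym in
lemma contractA' (g : A →ₗ[k] k) (c : A) : ∑ i, ϖ c (f i) * g (e i) = g c := by
  have h : ∀ i, ϖ c (f i) = ϖ (f i) c := fun i => hsym _ _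
  simp_rw [h]
  exact contractA ϖ e f hdual g c

include hsym in
lemma hDD1 (B : A →ₗ[k] A →ₗ[k] k) (x y : A) :
    ∑ i, ∑ j, ϖ x (f i) * ϖ y (f j) * B (e i) (e j) = B x y := by
  have inner : ∀ i, ∑ j, ϖ x (f i) * ϖ y (f j) * B (e i) (e j)
      = ϖ x (f i) * B (e i) y := by
    intro i
    rw [← contractA' ϖ e f hdual hsym (B (e i)) y, Finset.mul_sum]
    exact Finset.sum_congr rfl fun j _ => by ring
  rw [Finset.sum_congr rfl fun i _ => inner i]
  have hfin := contractA' ϖ e f hdual hsym (B.flip y) x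
  simp only [LinearMap.flip_apply] at hfin
  exact hfin

include hsym hnd in
lemma hDD2 (B : A →ₗ[k] A →ₗ[k] k) (x y : A) :
    ∑ i, ∑ j, ϖ x (f i) * ϖ y (e j) * B (e i) (f j) = B x y := by
  have inner : ∀ i, ∑ j, ϖ x (f i) * ϖ y (e j) * B (e i) (f j)
      = ϖ x (f i) * B (e i) y := by
    intro i
    rw [← contractB ϖ e f hdual hnd (B (e i)) y, Finset.mul_sum]
    exact Finset.sum_congr rfl fun j _ => by ring
  rw [Finset.sum_congr rfl fun i _ => inner i]
  have hfin := contractA' ϖ e f hdual hsym (B.flip y) x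
  simp only [LinearMap.flip_apply] at hfin
  exact hfin

include hsym hnd in
lemma hDD3 (B : A →ₗ[k] A →ₗ[k] k) (x y : A) :
    ∑ i, ∑ j, ϖ x (e i) * ϖ y (f j) * B (f i) (e j) = B x y := by
  have inner : ∀ i, ∑ j, ϖ x (e i) * ϖ y (f j) * B (f i) (e j)
      = ϖ x (e i) * B (f i) y := by
    intro i
    rw [← contractA' ϖ e f hdual hsym (B (f i)) y, Finset.mul_sum]
    exact Finset.sum_congr rfl fun j _ => by ring
  rw [Finset.sum_congr rfl fun i _ => inner i]
  have hfin := contractB ϖ e f hdual hnd (B.flip y) x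
  simp only [LinearMap.flip_apply] at hfin
  exact hfin

include hnd in
lemma hDD4 (B : A →ₗ[k] A →ₗ[k] k) (x y : A) :
    ∑ i, ∑ j, ϖ x (e i) * ϖ y (e j) * B (f i) (f j) = B x y := by
  have inner : ∀ i, ∑ j, ϖ x (e i) * ϖ y (e j) * B (f i) (f j)
      = ϖ x (e i) * B (f i) y := by
    intro i
    rw [← contractB ϖ e f hdual hnd (B (f i)) y, Finset.mul_sum]
    exact Finset.sum_congr rfl fun j _ => by ring
  rw [Finset.sum_congr rfl fun i _ => inner i]
  have hfin := contractB ϖ e f hdual hnd (B.flip y) x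
  simp only [LinearMap.flip_apply] at hfin
  exact hfin

include e in
lemma zero_of_trip (t : (A ⊗[k] A) ⊗[k] A)
    (h : ∀ p q s : Fin n, trip ϖ (f p) (f q) (f s) t = 0) : t = 0 := by
  set E3 := (e.tensorProduct e).tensorProduct e with hE3
  have key : ∀ p q s : Fin n, (trip ϖ (f p) (f q) (f s) : (A ⊗[k] A) ⊗[k] A →ₗ[k] k)
      = E3.coord ((p, q), s) := by
    intro p q s
    apply E3.ext
    rintro ⟨⟨j, l⟩, m⟩
    simp only [hE3, Module.Basis.tensorProduct_apply, trip_apply, hdual, Module.Basis.coord_apply,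
      Module.Basis.repr_self, Finsupp.single_apply]
    by_cases h1 : p = j <;> by_cases h2 : q = l <;> by_cases h3 : s = m <;>
      simp_all [Finsupp.single_apply, Prod.ext_iff, eq_comm]
  have hz : E3.repr t = 0 := by
    ext x
    obtain ⟨⟨p, q⟩, s⟩ := x
    have := h p q s
    rw [key p q s] at this
    simpa [Module.Basis.coord_apply] using this
  exact (LinearEquiv.map_eq_zero_iff E3.repr).mp hz

include hnd hsym in
lemma tripZ (ast : A →ₗ[k] A →ₗ[k] A) (a b c : A) :
    trip ϖ a b c (Zexp ast (fun i => e i) f)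
      = ϖ c (ast a b) + ϖ c (ast b a) - ϖ b (ast a c) - ϖ a (ast b c) := by
  have t1 : ∑ i : Fin n, ∑ j : Fin n, ϖ a (ast (e i) (e j)) * ϖ b (f j) * ϖ c (f i)
      = ϖ a (ast c b) := by
    have h := hDD1 ϖ e f hdual hsym (ast.compr₂ (ϖ a)) c b
    simp only [LinearMap.compr₂_apply] at h
    rw [← h]
    all_goals exact Finset.sum_congr rfl fun i _ => Finset.sum_congr rfl fun j _ => by ring
  have t2 : ∑ i : Fin n, ∑ j : Fin n, ϖ a (f j) * ϖ b (ast (e i) (e j)) * ϖ c (f i)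
      = ϖ b (ast c a) := by
    have h := hDD1 ϖ e f hdual hsym (ast.compr₂ (ϖ b)) c a
    simp only [LinearMap.compr₂_apply] at h
    rw [← h]
    all_goals exact Finset.sum_congr rfl fun i _ => Finset.sum_congr rfl fun j _ => by ring
  have t3 : ∑ i : Fin n, ∑ j : Fin n, ϖ a (e i) * ϖ b (e j) * ϖ c (ast (f i) (f j))
      = ϖ c (ast a b) := by
    have h := hDD4 ϖ e f hdual hnd (ast.compr₂ (ϖ c)) a b
    simp only [LinearMap.compr₂_apply] at h
    rw [← h]
    all_goals exact Finset.sum_congr rfl fun i _ => Finset.sum_congr rfl fun j _ => by ring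
  have t4 : ∑ i : Fin n, ∑ j : Fin n, ϖ a (e j) * ϖ b (e i) * ϖ c (ast (f i) (f j))
      = ϖ c (ast b a) := by
    have h := hDD4 ϖ e f hdual hnd (ast.compr₂ (ϖ c)) b a
    simp only [LinearMap.compr₂_apply] at h
    rw [← h]
    all_goals exact Finset.sum_congr rfl fun i _ => Finset.sum_congr rfl fun j _ => by ring
  have t5 : ∑ i : Fin n, ∑ j : Fin n, ϖ a (e i) * ϖ b (ast (f i) (e j)) * ϖ c (f j)
      = ϖ b (ast a c) := by
    have h := hDD3 ϖ e f hdual hnd hsym (ast.compr₂ (ϖ b)) a c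
    simp only [LinearMap.compr₂_apply] at h
    rw [← h]
    all_goals exact Finset.sum_congr rfl fun i _ => Finset.sum_congr rfl fun j _ => by ring
  have t6 : ∑ i : Fin n, ∑ j : Fin n, ϖ a (e j) * ϖ b (ast (e i) (f j)) * ϖ c (f i)
      = ϖ b (ast c a) := by
    have h := hDD2 ϖ e f hdual hnd hsym (ast.compr₂ (ϖ b)) c a
    simp only [LinearMap.compr₂_apply] at h
    rw [← h]
    all_goals exact Finset.sum_congr rfl fun i _ => Finset.sum_congr rfl fun j _ => by ring
  have t7 : ∑ i : Fin n, ∑ j : Fin n, ϖ a (ast (e i) (f j)) * ϖ b (e j) * ϖ c (f i)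
      = ϖ a (ast c b) := by
    have h := hDD2 ϖ e f hdual hnd hsym (ast.compr₂ (ϖ a)) c b
    simp only [LinearMap.compr₂_apply] at h
    rw [← h]
    all_goals exact Finset.sum_congr rfl fun i _ => Finset.sum_congr rfl fun j _ => by ring
  have t8 : ∑ i : Fin n, ∑ j : Fin n, ϖ a (ast (f i) (e j)) * ϖ b (e i) * ϖ c (f j)
      = ϖ a (ast b c) := by
    have h := hDD3 ϖ e f hdual hnd hsym (ast.compr₂ (ϖ a)) b c
    simp only [LinearMap.compr₂_apply] at h
    rw [← h]
    all_goals exact Finset.sum_congr rfl fun i _ => Finset.sum_congr rfl fun j _ => by ring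
  rw [Zexp]
  simp only [map_sum, map_add, map_sub, trip_apply]
  simp only [Finset.sum_add_distrib, Finset.sum_sub_distrib]
  rw [t1, t2, t3, t4, t5, t6, t7, t8]
  try ring

include hnd hsym in
lemma tripPL (circ : A →ₗ[k] A →ₗ[k] A) (a b c : A) :
    trip ϖ a b c (PLexp circ (fun i => e i) f)
      = ϖ a (circ b c) + ϖ c (circ b a) - ϖ b (circ a c) - ϖ c (circ a b) := by
  have t1 : ∑ i : Fin n, ∑ j : Fin n, ϖ a (circ (e i) (e j)) * ϖ b (f j) * ϖ c (f i)
      = ϖ a (circ c b) := by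
    have h := hDD1 ϖ e f hdual hsym (circ.compr₂ (ϖ a)) c b
    simp only [LinearMap.compr₂_apply] at h
    rw [← h]
    all_goals exact Finset.sum_congr rfl fun i _ => Finset.sum_congr rfl fun j _ => by ring
  have t2 : ∑ i : Fin n, ∑ j : Fin n, ϖ a (e j) * ϖ b (circ (e i) (f j)) * ϖ c (f i)
      = ϖ b (circ c a) := by
    have h := hDD2 ϖ e f hdual hnd hsym (circ.compr₂ (ϖ b)) c a
    simp only [LinearMap.compr₂_apply] at h
    rw [← h]
    all_goals exact Finset.sum_congr rfl fun i _ => Finset.sum_congr rfl fun j _ => by ring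
  have t3 : ∑ i : Fin n, ∑ j : Fin n, ϖ a (circ (f i) (e j)) * ϖ b (e i) * ϖ c (f j)
      = ϖ a (circ b c) := by
    have h := hDD3 ϖ e f hdual hnd hsym (circ.compr₂ (ϖ a)) b c
    simp only [LinearMap.compr₂_apply] at h
    rw [← h]
    all_goals exact Finset.sum_congr rfl fun i _ => Finset.sum_congr rfl fun j _ => by ring
  have t4 : ∑ i : Fin n, ∑ j : Fin n, ϖ a (e j) * ϖ b (e i) * ϖ c (circ (f i) (f j))
      = ϖ c (circ b a) := by
    have h := hDD4 ϖ e f hdual hnd (circ.compr₂ (ϖ c)) b a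
    simp only [LinearMap.compr₂_apply] at h
    rw [← h]
    all_goals exact Finset.sum_congr rfl fun i _ => Finset.sum_congr rfl fun j _ => by ring
  have t5 : ∑ i : Fin n, ∑ j : Fin n, ϖ a (f j) * ϖ b (circ (e i) (e j)) * ϖ c (f i)
      = ϖ b (circ c a) := by
    have h := hDD1 ϖ e f hdual hsym (circ.compr₂ (ϖ b)) c a
    simp only [LinearMap.compr₂_apply] at h
    rw [← h]
    all_goals exact Finset.sum_congr rfl fun i _ => Finset.sum_congr rfl fun j _ => by ring
  have t6 : ∑ i : Fin n, ∑ j : Fin n, ϖ a (e i) * ϖ b (circ (f i) (e j)) * ϖ c (f j)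
      = ϖ b (circ a c) := by
    have h := hDD3 ϖ e f hdual hnd hsym (circ.compr₂ (ϖ b)) a c
    simp only [LinearMap.compr₂_apply] at h
    rw [← h]
    all_goals exact Finset.sum_congr rfl fun i _ => Finset.sum_congr rfl fun j _ => by ring
  have t7 : ∑ i : Fin n, ∑ j : Fin n, ϖ a (circ (e i) (f j)) * ϖ b (e j) * ϖ c (f i)
      = ϖ a (circ c b) := by
    have h := hDD2 ϖ e f hdual hnd hsym (circ.compr₂ (ϖ a)) c b
    simp only [LinearMap.compr₂_apply] at h
    rw [← h]
    all_goals exact Finset.sum_congr rfl fun i _ => Finset.sum_congr rfl fun j _ => by ring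
  have t8 : ∑ i : Fin n, ∑ j : Fin n, ϖ a (e i) * ϖ b (e j) * ϖ c (circ (f i) (f j))
      = ϖ c (circ a b) := by
    have h := hDD4 ϖ e f hdual hnd (circ.compr₂ (ϖ c)) a b
    simp only [LinearMap.compr₂_apply] at h
    rw [← h]
    all_goals exact Finset.sum_congr rfl fun i _ => Finset.sum_congr rfl fun j _ => by ring
  rw [PLexp]
  simp only [map_sum, map_add, map_sub, trip_apply]
  simp only [Finset.sum_add_distrib, Finset.sum_sub_distrib]
  rw [t1, t2, t3, t4, t5, t6, t7, t8]
  try ring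

end Aux

theorem statement17 (k A : Type) [Field k] [CharZero k]
    [AddCommGroup A] [Module k A] [FiniteDimensional k A]
    (ast circ : A →ₗ[k] A →ₗ[k] A) (hA : IsPrePoisson ast circ)
    (ϖ : A →ₗ[k] A →ₗ[k] k)
    (hnd : ∀ a : A, (∀ a' : A, ϖ a a' = 0) → a = 0)
    (n : ℕ) (e : Module.Basis (Fin n) k A) (f : Fin n → A)
    (hdual : ∀ i j : Fin n, ϖ (f i) (e j) = if i = j then 1 else 0)
    (r : A ⊗[k] A) (hr : r = ∑ i : Fin n, (e i : A) ⊗ₜ[k] (f i)) :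
    ((TensorProduct.comm k A A) r = r ∧
     Zexp ast (fun i => (e i : A)) f = 0 ∧
     PLexp circ (fun i => (e i : A)) f = 0)
      ↔ (((∀ a₁ a₂ : A, ϖ a₁ a₂ = ϖ a₂ a₁) ∧
       (∀ a₁ a₂ a₃ : A,
         ϖ (ast a₁ a₂ + ast a₂ a₁) a₃ = ϖ a₁ (ast a₂ a₃) + ϖ a₂ (ast a₁ a₃))) ∧
         (∀ a₁ a₂ a₃ : A,
         ϖ (circ a₁ a₂) a₃ - ϖ a₁ (circ a₂ a₃) = ϖ (circ a₂ a₁) a₃ - ϖ a₂ (circ a₁ a₃))) := by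
  constructor
  · rintro ⟨hs, hz, hp⟩
    rw [hr] at hs
    simp only [map_sum, TensorProduct.comm_tmul] at hs
    have hϖ : ∀ a b : A, ϖ a b = ϖ b a := by
      intro a b
      have h2 := congrArg (pairW ϖ a b) hs
      simp only [map_sum, pairW_apply] at h2
      have hL : ∑ i : Fin n, ϖ a (f i) * ϖ b (e i) = ϖ a b := by
        rw [← contractB ϖ e f hdual hnd (ϖ a) b]
        exact Finset.sum_congr rfl fun i _ => mul_comm _ _
      have hR : ∑ i : Fin n, ϖ a (e i) * ϖ b (f i) = ϖ b a :=
        contractB ϖ e f hdual hnd (ϖ b) a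
      rw [hL, hR] at h2
      exact h2
    refine ⟨⟨hϖ, ?_⟩, ?_⟩
    · intro a₁ a₂ a₃
      have h := tripZ ϖ e f hdual hnd hϖ ast a₁ a₂ a₃
      rw [hz] at h
      simp only [map_zero] at h
      have e1 := hϖ (ast a₁ a₂) a₃
      have e2 := hϖ (ast a₂ a₁) a₃
      simp only [map_add, LinearMap.add_apply]
      linear_combination e1 + e2 - h
    · intro a₁ a₂ a₃
      have h := tripPL ϖ e f hdual hnd hϖ circ a₁ a₂ a₃
      rw [hp] at h
      simp only [map_zero] at h
      have e1 := hϖ (circ a₁ a₂) a₃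
      have e2 := hϖ (circ a₂ a₁) a₃
      linear_combination e1 - e2 + h
  · rintro ⟨⟨hϖ, hzf⟩, hpf⟩
    refine ⟨?_, ?_, ?_⟩
    · rw [hr]
      simp only [map_sum, TensorProduct.comm_tmul]
      have hL : (∑ i : Fin n, f i ⊗ₜ[k] e i)
          = ∑ i : Fin n, ∑ j : Fin n, ϖ (f j) (f i) • (e j ⊗ₜ[k] e i) := by
        refine Finset.sum_congr rfl fun i _ => ?_
        conv_lhs => rw [← expandA ϖ e f hdual (f i)]
        rw [TensorProduct.sum_tmul]
        exact Finset.sum_congr rfl fun j _ => by rw [TensorProduct.smul_tmul']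
      have hR : (∑ i : Fin n, e i ⊗ₜ[k] f i)
          = ∑ i : Fin n, ∑ j : Fin n, ϖ (f j) (f i) • (e i ⊗ₜ[k] e j) := by
        refine Finset.sum_congr rfl fun i _ => ?_
        conv_lhs => rw [← expandA ϖ e f hdual (f i)]
        rw [TensorProduct.tmul_sum]
        exact Finset.sum_congr rfl fun j _ => by rw [TensorProduct.tmul_smul]
      rw [hL, hR]
      conv_lhs => rw [Finset.sum_comm]
      exact Finset.sum_congr rfl fun i _ => Finset.sum_congr rfl fun j _ => by
        rw [hϖ (f i) (f j)]
    · apply zero_of_trip ϖ e f hdual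
      intro p q s
      rw [tripZ ϖ e f hdual hnd hϖ ast (f p) (f q) (f s)]
      have h := hzf (f p) (f q) (f s)
      simp only [map_add, LinearMap.add_apply] at h
      have e1 := hϖ (ast (f p) (f q)) (f s)
      have e2 := hϖ (ast (f q) (f p)) (f s)
      linear_combination h - e1 - e2
    · apply zero_of_trip ϖ e f hdual
      intro p q s
      rw [tripPL ϖ e f hdual hnd hϖ circ (f p) (f q) (f s)]
      have h := hpf (f p) (f q) (f s)
      have e1 := hϖ (circ (f p) (f q)) (f s)
      have e2 := hϖ (circ (f q) (f p)) (f s)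
      linear_combination e1 - e2 - h
end
end

section
/- Let k be a field of characteristic zero, (A, ∗, ∘, ϖ) a quasi-Frobenius pre-Poisson algebra, (B, ⋄, ω) a quadratic perm algebra, and (A ⊗ B, ·, [−,−]) the induced Poisson algebra. Define the bilinear form 𝔅 on A ⊗ B by 𝔅(a₁ ⊗ b₁, a₂ ⊗ b₂) = ϖ(a₁, a₂)·ω(b₁, b₂). Then 𝔅 is antisymmetric and nondegenerate and satisfies both cyclic conditions 𝔅(u₁·u₂, u₃) + 𝔅(u₂·u₃, u₁) + 𝔅(u₃·u₁, u₂) = 0 and 𝔅([u₁, u₂], u₃) + 𝔅([u₂, u₃], u₁) + 𝔅([u₃, u₁], u₂) = 0 for all u₁, u₂, u₃ ∈ A ⊗ B; that is, (A ⊗ B, ·, [−,−], 𝔅) is a quasi-Frobenius Poisson algebra. -/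
open TensorProduct

noncomputable section

theorem statement18 (k A B : Type) [Field k] [CharZero k]
    [AddCommGroup A] [Module k A] [FiniteDimensional k A]
    [AddCommGroup B] [Module k B] [FiniteDimensional k B]
    (ast circ : A →ₗ[k] A →ₗ[k] A) (hA : IsPrePoisson ast circ)
    (ϖ : A →ₗ[k] A →ₗ[k] k)
    (hϖsym : ∀ a₁ a₂ : A, ϖ a₁ a₂ = ϖ a₂ a₁)
    (hϖnd : ∀ a : A, (∀ a' : A, ϖ a a' = 0) → a = 0)
    (hϖcoc : ∀ a₁ a₂ a₃ : A,
      ϖ (ast a₁ a₂ + ast a₂ a₁) a₃ = ϖ a₁ (ast a₂ a₃) + ϖ a₂ (ast a₁ a₃))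
    (hϖcoc' : ∀ a₁ a₂ a₃ : A,
      ϖ (circ a₁ a₂) a₃ - ϖ a₁ (circ a₂ a₃) = ϖ (circ a₂ a₁) a₃ - ϖ a₂ (circ a₁ a₃))
    (dia : B →ₗ[k] B →ₗ[k] B) (hdia : IsPerm dia)
    (ω : B →ₗ[k] B →ₗ[k] k)
    (hω₁ : ∀ b₁ b₂ : B, ω b₁ b₂ = - ω b₂ b₁)
    (hω₂ : ∀ b₁ : B, (∀ b₂ : B, ω b₁ b₂ = 0) → b₁ = 0)
    (hω₃ : ∀ b₁ b₂ b₃ : B, ω (dia b₁ b₂) b₃ = ω b₁ (dia b₂ b₃ - dia b₃ b₂))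
    (m : A ⊗[k] B →ₗ[k] A ⊗[k] B →ₗ[k] A ⊗[k] B)
    (hm : ∀ (a₁ a₂ : A) (b₁ b₂ : B),
      m (a₁ ⊗ₜ[k] b₁) (a₂ ⊗ₜ[k] b₂)
        = (ast a₁ a₂) ⊗ₜ[k] (dia b₁ b₂) + (ast a₂ a₁) ⊗ₜ[k] (dia b₂ b₁))
    (br : A ⊗[k] B →ₗ[k] A ⊗[k] B →ₗ[k] A ⊗[k] B)
    (hbr : ∀ (a₁ a₂ : A) (b₁ b₂ : B),
      br (a₁ ⊗ₜ[k] b₁) (a₂ ⊗ₜ[k] b₂)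
        = (circ a₁ a₂) ⊗ₜ[k] (dia b₁ b₂) - (circ a₂ a₁) ⊗ₜ[k] (dia b₂ b₁))
    (Bf : A ⊗[k] B →ₗ[k] A ⊗[k] B →ₗ[k] k)
    (hBf : ∀ (a₁ a₂ : A) (b₁ b₂ : B),
      Bf (a₁ ⊗ₜ[k] b₁) (a₂ ⊗ₜ[k] b₂) = ϖ a₁ a₂ * ω b₁ b₂)
    :
    IsPoisson m br ∧
    (∀ u v : A ⊗[k] B, Bf u v = - Bf v u) ∧
    (∀ u : A ⊗[k] B, (∀ v : A ⊗[k] B, Bf u v = 0) → u = 0) ∧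
    (∀ u₁ u₂ u₃ : A ⊗[k] B,
      Bf (m u₁ u₂) u₃ + Bf (m u₂ u₃) u₁ + Bf (m u₃ u₁) u₂ = 0) ∧
    (∀ u₁ u₂ u₃ : A ⊗[k] B,
      Bf (br u₁ u₂) u₃ + Bf (br u₂ u₃) u₁ + Bf (br u₃ u₁) u₂ = 0) := by
  obtain ⟨hZ, hPL, hC1, hC2⟩ := hA
  -- perm identities
  have hd1 : ∀ x y z : B, dia x (dia y z) = dia (dia x y) z := fun x y z => (hdia x y z).1
  have hd2 : ∀ x y z : B, dia (dia x y) z = dia (dia y x) z := fun x y z => (hdia x y z).2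
  -- rearranged pre-Lie and compatibility identities
  have hPL' : ∀ x y z : A, circ (circ y x) z
      = circ (circ x y) z - circ x (circ y z) + circ y (circ x z) := by
    intro x y z
    exact eq_add_of_sub_eq (hPL x y z).symm
  have hC1' : ∀ x y z : A, circ x (ast y z)
      = ast (circ x y) z - ast (circ y x) z + ast y (circ x z) := by
    intro x y z
    have h := hC1 x y z
    rw [map_sub, LinearMap.sub_apply] at h
    exact eq_add_of_sub_eq h.symm
  have hC2' : ∀ x y z : A, circ (ast x y) z
      = ast x (circ y z) + ast y (circ x z) - circ (ast y x) z := by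
    intro x y z
    have h := hC2 x y z
    rw [map_add, LinearMap.add_apply] at h
    exact eq_sub_of_add_eq h
  -- scalar relations
  have hF : ∀ x y z : A, ϖ (ast x y) z + ϖ (ast y x) z = ϖ (ast y z) x + ϖ (ast x z) y := by
    intro x y z
    have h := hϖcoc x y z
    rw [map_add, LinearMap.add_apply] at h
    rw [h, hϖsym x (ast y z), hϖsym y (ast x z)]
  have hH : ∀ x y z : A, ϖ (circ x y) z - ϖ (circ y x) z
      = ϖ (circ y z) x - ϖ (circ x z) y := by
    intro x y z
    have h := hϖcoc' x y z
    rw [hϖsym x (circ y z), hϖsym y (circ x z)] at h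
    linear_combination h
  have hW : ∀ x y z : B, ω (dia x y) z = ω (dia z y) x - ω (dia y z) x := by
    intro x y z
    have h := hω₃ x y z
    rw [map_sub, hω₁ x (dia y z), hω₁ x (dia z y)] at h
    linear_combination h
  -- commutativity of m
  have hmcomm : ∀ u v : A ⊗[k] B, m u v = m v u := by
    intro u v
    induction u using TensorProduct.induction_on with
    | zero => simp
    | add x y hx hy => simp only [map_add, LinearMap.add_apply, hx, hy]
    | tmul a b =>
      induction v using TensorProduct.induction_on with
      | zero => simp
      | add x y hx hy => simp only [map_add, LinearMap.add_apply, hx, hy]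
      | tmul a' b' => rw [hm, hm]; abel
  -- associativity of m
  have hmassoc : ∀ u v w : A ⊗[k] B, m (m u v) w = m u (m v w) := by
    intro u v w
    induction u using TensorProduct.induction_on with
    | zero => simp
    | add x y hx hy => simp only [map_add, LinearMap.add_apply, hx, hy]
    | tmul a₁ b₁ =>
      induction v using TensorProduct.induction_on with
      | zero => simp
      | add x y hx hy => simp only [map_add, LinearMap.add_apply, hx, hy]
      | tmul a₂ b₂ =>
        induction w using TensorProduct.induction_on with
        | zero => simp
        | add x y hx hy => simp only [map_add, LinearMap.add_apply, hx, hy]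
        | tmul a₃ b₃ =>
          simp only [hm, map_add, LinearMap.add_apply]
          simp only [hd1]
          simp only [hd2 b₂ b₁ b₃, hd2 b₃ b₁ b₂, hd2 b₃ b₂ b₁]
          rw [hZ a₃ a₁ a₂, hZ a₃ a₂ a₁, hZ a₁ a₂ a₃, hZ a₁ a₃ a₂]
          simp only [add_tmul]
          abel
  -- antisymmetry of br
  have hbranti : ∀ u v : A ⊗[k] B, br u v = - br v u := by
    intro u v
    induction u using TensorProduct.induction_on with
    | zero => simp
    | add x y hx hy => simp only [map_add, LinearMap.add_apply, hx, hy]; abel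
    | tmul a b =>
      induction v using TensorProduct.induction_on with
      | zero => simp
      | add x y hx hy => simp only [map_add, LinearMap.add_apply, hx, hy]; abel
      | tmul a' b' => rw [hbr, hbr]; abel
  -- Jacobi identity
  have hjac : ∀ u v w : A ⊗[k] B, br (br u v) w + br (br v w) u + br (br w u) v = 0 := by
    intro u v w
    induction u using TensorProduct.induction_on with
    | zero => simp
    | add x y hx hy =>
      simp only [map_add, LinearMap.add_apply]
      calc br (br x v) w + br (br y v) w + (br (br v w) x + br (br v w) y)
            + (br (br w x) v + br (br w y) v)
          = (br (br x v) w + br (br v w) x + br (br w x) v)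
            + (br (br y v) w + br (br v w) y + br (br w y) v) := by abel
        _ = 0 := by rw [hx, hy, add_zero]
    | tmul a₁ b₁ =>
      induction v using TensorProduct.induction_on with
      | zero => simp
      | add x y hx hy =>
        simp only [map_add, LinearMap.add_apply]
        calc br (br (a₁ ⊗ₜ[k] b₁) x) w + br (br (a₁ ⊗ₜ[k] b₁) y) w
              + (br (br x w) (a₁ ⊗ₜ[k] b₁) + br (br y w) (a₁ ⊗ₜ[k] b₁))
              + (br (br w (a₁ ⊗ₜ[k] b₁)) x + br (br w (a₁ ⊗ₜ[k] b₁)) y)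
            = (br (br (a₁ ⊗ₜ[k] b₁) x) w + br (br x w) (a₁ ⊗ₜ[k] b₁)
                + br (br w (a₁ ⊗ₜ[k] b₁)) x)
              + (br (br (a₁ ⊗ₜ[k] b₁) y) w + br (br y w) (a₁ ⊗ₜ[k] b₁)
                + br (br w (a₁ ⊗ₜ[k] b₁)) y) := by abel
          _ = 0 := by rw [hx, hy, add_zero]
      | tmul a₂ b₂ =>
        induction w using TensorProduct.induction_on with
        | zero => simp
        | add x y hx hy =>
          simp only [map_add, LinearMap.add_apply]
          calc br (br (a₁ ⊗ₜ[k] b₁) (a₂ ⊗ₜ[k] b₂)) x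
                + br (br (a₁ ⊗ₜ[k] b₁) (a₂ ⊗ₜ[k] b₂)) y
                + (br (br (a₂ ⊗ₜ[k] b₂) x) (a₁ ⊗ₜ[k] b₁)
                  + br (br (a₂ ⊗ₜ[k] b₂) y) (a₁ ⊗ₜ[k] b₁))
                + (br (br x (a₁ ⊗ₜ[k] b₁)) (a₂ ⊗ₜ[k] b₂)
                  + br (br y (a₁ ⊗ₜ[k] b₁)) (a₂ ⊗ₜ[k] b₂))
              = (br (br (a₁ ⊗ₜ[k] b₁) (a₂ ⊗ₜ[k] b₂)) x
                  + br (br (a₂ ⊗ₜ[k] b₂) x) (a₁ ⊗ₜ[k] b₁)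
                  + br (br x (a₁ ⊗ₜ[k] b₁)) (a₂ ⊗ₜ[k] b₂))
                + (br (br (a₁ ⊗ₜ[k] b₁) (a₂ ⊗ₜ[k] b₂)) y
                  + br (br (a₂ ⊗ₜ[k] b₂) y) (a₁ ⊗ₜ[k] b₁)
                  + br (br y (a₁ ⊗ₜ[k] b₁)) (a₂ ⊗ₜ[k] b₂)) := by abel
            _ = 0 := by rw [hx, hy, add_zero]
        | tmul a₃ b₃ =>
          simp only [hbr, map_sub, LinearMap.sub_apply]
          simp only [hd1]
          simp only [hd2 b₂ b₁ b₃, hd2 b₃ b₁ b₂, hd2 b₃ b₂ b₁]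
          rw [hPL' a₁ a₂ a₃, hPL' a₂ a₃ a₁, hPL' a₃ a₁ a₂]
          simp only [add_tmul, sub_tmul]
          abel
  -- Leibniz identity
  have hleib : ∀ u v w : A ⊗[k] B, br u (m v w) = m (br u v) w + m v (br u w) := by
    intro u v w
    induction u using TensorProduct.induction_on with
    | zero => simp
    | add x y hx hy =>
      simp only [map_add, LinearMap.add_apply, hx, hy]
      abel
    | tmul a₁ b₁ =>
      induction v using TensorProduct.induction_on with
      | zero => simp
      | add x y hx hy =>
        simp only [map_add, LinearMap.add_apply, hx, hy]
        abel
      | tmul a₂ b₂ =>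
        induction w using TensorProduct.induction_on with
        | zero => simp
        | add x y hx hy =>
          simp only [map_add, LinearMap.add_apply, hx, hy]
          abel
        | tmul a₃ b₃ =>
          simp only [hm, hbr, map_add, map_sub, LinearMap.add_apply, LinearMap.sub_apply]
          simp only [hd1]
          simp only [hd2 b₂ b₁ b₃, hd2 b₃ b₁ b₂, hd2 b₃ b₂ b₁]
          rw [hC1' a₁ a₂ a₃, hC1' a₁ a₃ a₂, hC2' a₂ a₃ a₁]
          simp only [add_tmul, sub_tmul]
          abel
  -- antisymmetry of Bf
  have hBfanti : ∀ u v : A ⊗[k] B, Bf u v = - Bf v u := by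
    intro u v
    induction u using TensorProduct.induction_on with
    | zero => simp
    | add x y hx hy => simp only [map_add, LinearMap.add_apply, hx, hy]; ring
    | tmul a b =>
      induction v using TensorProduct.induction_on with
      | zero => simp
      | add x y hx hy => simp only [map_add, LinearMap.add_apply, hx, hy]; ring
      | tmul a' b' =>
        rw [hBf, hBf, hϖsym a' a, hω₁ b' b]
        ring
  -- nondegeneracy of Bf
  have hBfnd : ∀ u : A ⊗[k] B, (∀ v : A ⊗[k] B, Bf u v = 0) → u = 0 := by
    let eA : A ≃ₗ[k] Module.Dual k A := LinearMap.BilinForm.toDual ϖ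
      ⟨hϖnd, fun y h => hϖnd y (fun x => by rw [hϖsym]; exact h x)⟩
    let eB : B ≃ₗ[k] Module.Dual k B := LinearMap.BilinForm.toDual ω
      ⟨hω₂, fun y h => hω₂ y (fun x => by rw [hω₁, h x, neg_zero])⟩
    let Φ : A ⊗[k] B ≃ₗ[k] Module.Dual k (A ⊗[k] B) :=
      (TensorProduct.congr eA eB).trans (TensorProduct.dualDistribEquiv k A B)
    have key : ∀ u v : A ⊗[k] B, Bf u v = Φ u v := by
      intro u v
      induction u using TensorProduct.induction_on with
      | zero => simp
      | add x y hx hy => simp [map_add, LinearMap.add_apply, hx, hy]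
      | tmul a b =>
        induction v using TensorProduct.induction_on with
        | zero => simp
        | add x y hx hy => simp [map_add, hx, hy]
        | tmul a' b' =>
          rw [hBf]
          show ϖ a a' * ω b b'
            = ((TensorProduct.congr eA eB).trans (TensorProduct.dualDistribEquiv k A B))
                (a ⊗ₜ[k] b) (a' ⊗ₜ[k] b')
          simp only [LinearEquiv.trans_apply, TensorProduct.congr_tmul,
            TensorProduct.dualDistribEquiv, TensorProduct.dualDistribEquivOfBasis,
            LinearEquiv.ofLinear_apply, TensorProduct.dualDistrib_apply, smul_eq_mul]
          rfl
    intro u hu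
    have h0 : Φ u = 0 := by
      apply LinearMap.ext
      intro v
      rw [← key u v, hu v, LinearMap.zero_apply]
    have := Φ.injective (by rw [h0, map_zero] : Φ u = Φ 0)
    exact this
  refine ⟨⟨hmcomm, hmassoc, hbranti, hjac, hleib⟩, hBfanti, hBfnd, ?_, ?_⟩
  · -- cyclic condition for m
    intro u₁ u₂ u₃
    induction u₁ using TensorProduct.induction_on with
    | zero => simp
    | add x y hx hy =>
      simp only [map_add, LinearMap.add_apply]
      linear_combination hx + hy
    | tmul a₁ b₁ =>
      induction u₂ using TensorProduct.induction_on with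
      | zero => simp
      | add x y hx hy =>
        simp only [map_add, LinearMap.add_apply]
        linear_combination hx + hy
      | tmul a₂ b₂ =>
        induction u₃ using TensorProduct.induction_on with
        | zero => simp
        | add x y hx hy =>
          simp only [map_add, LinearMap.add_apply]
          linear_combination hx + hy
        | tmul a₃ b₃ =>
          simp only [hm, map_add, LinearMap.add_apply, hBf]
          linear_combination
            (ϖ (ast a₂ a₃) a₁) * (hW b₂ b₁ b₃ + hW b₂ b₃ b₁)
            + (ϖ (ast a₃ a₂) a₁) * (- hW b₁ b₂ b₃ + hW b₂ b₁ b₃ + hW b₂ b₃ b₁)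
            + (ϖ (ast a₃ a₁) a₂) * (hW b₃ b₁ b₂)
            + (ϖ (ast a₁ a₃) a₂) * (hW b₂ b₁ b₃ + hW b₃ b₁ b₂)
            + (ω (dia b₁ b₂) b₃) * (hF a₁ a₂ a₃ + hF a₂ a₃ a₁)
            - (ω (dia b₂ b₁) b₃) * (hF a₂ a₃ a₁)
  · -- cyclic condition for br
    intro u₁ u₂ u₃
    induction u₁ using TensorProduct.induction_on with
    | zero => simp
    | add x y hx hy =>
      simp only [map_add, LinearMap.add_apply]
      linear_combination hx + hy
    | tmul a₁ b₁ =>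
      induction u₂ using TensorProduct.induction_on with
      | zero => simp
      | add x y hx hy =>
        simp only [map_add, LinearMap.add_apply]
        linear_combination hx + hy
      | tmul a₂ b₂ =>
        induction u₃ using TensorProduct.induction_on with
        | zero => simp
        | add x y hx hy =>
          simp only [map_add, LinearMap.add_apply]
          linear_combination hx + hy
        | tmul a₃ b₃ =>
          simp only [hbr, map_sub, LinearMap.sub_apply, hBf]
          linear_combination
            (ϖ (circ a₂ a₃) a₁) * (hW b₂ b₁ b₃ + hW b₂ b₃ b₁)
            + (ϖ (circ a₃ a₂) a₁) * (hW b₁ b₂ b₃ - hW b₂ b₁ b₃ - hW b₂ b₃ b₁)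
            + (ϖ (circ a₃ a₁) a₂) * (hW b₃ b₁ b₂)
            + (ϖ (circ a₁ a₃) a₂) * (- hW b₂ b₁ b₃ - hW b₃ b₁ b₂)
            + (ω (dia b₁ b₂) b₃) * (hH a₁ a₂ a₃ + hH a₂ a₃ a₁)
            - (ω (dia b₂ b₁) b₃) * (hH a₂ a₃ a₁)
end
end
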